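/- (LP duality for perfect graphs) Let G = (V,E) be a finite perfect graph with nonnegative real vertex weights w. Then there exists a nonnegative function y on the nonempty cliques of G with Σ_{Q : v ∈ Q} y_Q ≥ w(v) for every v ∈ V and Σ_Q y_Q = worth(G), where worth(G) is the maximum of Σ_{v ∈ S} w(v) over stable sets S of G. Consequently the minimum of Σ_Q y_Q over all such dual-feasible y equals worth(G). -/

import Mathlib

open scoped Classical

def IsStableSet {V : Type*} (G : SimpleGraph V) (S : Set V) : Prop :=
  S.Pairwise fun u v => ¬ G.Adj u v

def IsPerfect {V : Type*} (G : SimpleGraph V) : Prop :=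
  ∀ T : Set V, (G.induce T).chromaticNumber = ((G.induce T).cliqueNum : ℕ∞)

noncomputable def stableWorth {V : Type*} [Fintype V] (G : SimpleGraph V) (w : V → ℝ)
    (T : Set V) : ℝ :=
  sSup {x : ℝ | ∃ S : Finset V, ↑S ⊆ T ∧ IsStableSet G ↑S ∧ x = ∑ v ∈ S, w v}

noncomputable def cliquesOf {V : Type*} [Fintype V] (G : SimpleGraph V) : Finset (Finset V) :=
  Finset.univ.filter fun Q => Q.Nonempty ∧ G.IsClique (↑Q : Set V)

set_option linter.unusedSectionVars false
set_option maxHeartbeats 1000000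

namespace PGLP

open Finset

variable {V : Type*} [Fintype V]

noncomputable def cl (H : SimpleGraph V) : Finset (Finset V) :=
  Finset.univ.filter fun Q => H.IsClique (↑Q : Set V)

noncomputable def omegaW (H : SimpleGraph V) (h : V → ℕ) : ℕ :=
  (cl H).sup fun Q => ∑ v ∈ Q, h v

noncomputable def indC (T : Finset V) : V → ℕ := fun v => if v ∈ T then 1 else 0

def Cov (H : SimpleGraph V) (h : V → ℕ) (c : Finset V → ℕ) : Prop :=
  (∀ S, c S ≠ 0 → IsStableSet H (↑S : Set V)) ∧
  (∀ v, ∑ S ∈ Finset.univ.filter (fun S : Finset V => v ∈ S), c S = h v) ∧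
  ∑ S : Finset V, c S ≤ omegaW H h

lemma mem_cl {H : SimpleGraph V} {Q : Finset V} : Q ∈ cl H ↔ H.IsClique (↑Q : Set V) := by
  simp [cl]

lemma empty_mem_cl (H : SimpleGraph V) : (∅ : Finset V) ∈ cl H := by
  simp [mem_cl, SimpleGraph.IsClique]

lemma singleton_mem_cl (H : SimpleGraph V) (v : V) : ({v} : Finset V) ∈ cl H := by
  simp [mem_cl, SimpleGraph.IsClique]

lemma le_omegaW {H : SimpleGraph V} {Q : Finset V} (hQ : Q ∈ cl H) (h : V → ℕ) :
    ∑ v ∈ Q, h v ≤ omegaW H h :=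
  Finset.le_sup (f := fun Q => ∑ v ∈ Q, h v) hQ

lemma single_le_omegaW (H : SimpleGraph V) (h : V → ℕ) (v : V) : h v ≤ omegaW H h := by
  have := le_omegaW (singleton_mem_cl H v) h
  simpa using this

lemma omegaW_mono {H : SimpleGraph V} {h h' : V → ℕ} (hle : ∀ v, h v ≤ h' v) :
    omegaW H h ≤ omegaW H h' := by
  apply Finset.sup_le
  intro Q hQ
  exact le_trans (Finset.sum_le_sum fun v _ => hle v) (le_omegaW hQ h')

lemma swap_sum {M : Type*} [AddCommMonoid M] (A : Finset V) (𝒜 : Finset (Finset V))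
    (y : Finset V → M) :
    ∑ v ∈ A, ∑ Q ∈ 𝒜.filter (fun Q => v ∈ Q), y Q = ∑ Q ∈ 𝒜, (A ∩ Q).card • y Q := by
  calc ∑ v ∈ A, ∑ Q ∈ 𝒜.filter (fun Q => v ∈ Q), y Q
      = ∑ v ∈ A, ∑ Q ∈ 𝒜, if v ∈ Q then y Q else 0 := by
        refine Finset.sum_congr rfl fun v _ => ?_
        rw [Finset.sum_filter]
    _ = ∑ Q ∈ 𝒜, ∑ v ∈ A, if v ∈ Q then y Q else 0 := Finset.sum_comm
    _ = ∑ Q ∈ 𝒜, (A ∩ Q).card • y Q := by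
        refine Finset.sum_congr rfl fun Q _ => ?_
        rw [Finset.sum_ite_mem, Finset.sum_const]

lemma clique_inter_stable {H : SimpleGraph V} {Q S : Finset V}
    (hQ : H.IsClique (↑Q : Set V)) (hS : IsStableSet H (↑S : Set V)) :
    (Q ∩ S).card ≤ 1 := by
  rw [Finset.card_le_one]
  intro a ha b hb
  rw [Finset.mem_inter] at ha hb
  by_contra hne
  exact hS (by exact_mod_cast ha.2) (by exact_mod_cast hb.2) hne (hQ (by exact_mod_cast ha.1) (by exact_mod_cast hb.1) hne)

lemma isStableSet_compl_iff {H : SimpleGraph V} {Q : Finset V} :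
    IsStableSet Hᶜ (↑Q : Set V) ↔ H.IsClique (↑Q : Set V) := by
  constructor
  · intro h a ha b hb hne
    have h2 : ¬ Hᶜ.Adj a b := h ha hb hne
    rw [SimpleGraph.compl_adj] at h2
    push_neg at h2
    exact h2 hne
  · intro h a ha b hb hne hadj
    rw [SimpleGraph.compl_adj] at hadj
    exact hadj.2 (h ha hb hne)

lemma isClique_compl_iff {H : SimpleGraph V} {S : Finset V} :
    Hᶜ.IsClique (↑S : Set V) ↔ IsStableSet H (↑S : Set V) := by
  constructor
  · intro h a ha b hb hne hadj
    have h2 : Hᶜ.Adj a b := h ha hb hne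
    rw [SimpleGraph.compl_adj] at h2
    exact h2.2 hadj
  · intro h a ha b hb hne
    exact SimpleGraph.compl_adj H a b |>.mpr ⟨hne, h ha hb hne⟩


theorem wcover (H : SimpleGraph V)
    (hbase : ∀ T : Finset V, ∃ c, Cov H (indC T) c) :
    ∀ n (h : V → ℕ), ∑ v, h v ≤ n → ∃ c, Cov H h c := by
  intro n
  induction n using Nat.strong_induction_on with
  | _ n ih =>
    intro h hsum
    by_cases hsm : ∀ v, h v ≤ 1
    · -- base case: h is an indicator
      have heq : h = indC (Finset.univ.filter fun v => h v = 1) := by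
        funext v
        have := hsm v
        by_cases hv : h v = 1 <;> simp [indC, hv] <;> omega
      rw [heq]
      exact hbase _
    · push_neg at hsm
      obtain ⟨v, hv2⟩ := hsm
      have hv2 : 2 ≤ h v := hv2
      set h' : V → ℕ := fun u => if u = v then h v - 1 else h u with hh'
      have hpt : ∀ u, h u = h' u + (if u = v then 1 else 0) := by
        intro u
        by_cases hu : u = v
        · subst hu; simp [hh']; omega
        · simp [hh', hu]
      have hh'le : ∀ u, h' u ≤ h u := by
        intro u; rw [hpt u]; omega
      have hsum'' : ∑ u, h u = (∑ u, h' u) + 1 := by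
        rw [Finset.sum_congr rfl fun u _ => hpt u, Finset.sum_add_distrib,
          Finset.sum_ite_eq' Finset.univ v (fun _ => 1)]
        simp
      have hn1 : 1 ≤ n := by
        have : h v ≤ ∑ u, h u := Finset.single_le_sum (fun u _ => Nat.zero_le _) (Finset.mem_univ v)
        omega
      have hsumQ : ∀ Q : Finset V, ∑ u ∈ Q, h u = ∑ u ∈ Q, h' u + (if v ∈ Q then 1 else 0) := by
        intro Q
        rw [Finset.sum_congr rfl fun u _ => hpt u, Finset.sum_add_distrib,
          Finset.sum_ite_eq' Q v (fun _ => 1)]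
      have hω'le : omegaW H h' ≤ omegaW H h := omegaW_mono hh'le
      have hωle : omegaW H h ≤ omegaW H h' + 1 := by
        apply Finset.sup_le
        intro Q hQ
        rw [hsumQ Q]
        have := le_omegaW hQ h'
        split <;> omega
      have hωh2 : 2 ≤ omegaW H h := le_trans hv2 (single_le_omegaW H h v)
      by_cases hcase : omegaW H h ≤ omegaW H h'
      · -- Case B
        have hωeq : omegaW H h = omegaW H h' := le_antisymm hcase hω'le
        obtain ⟨c', hc'⟩ := ih (n - 1) (by omega) h' (by omega)
        obtain ⟨hc'st, hc'cov, hc'tot⟩ := hc'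
        have hvcov : ∑ S ∈ Finset.univ.filter (fun S : Finset V => v ∈ S), c' S = h v - 1 := by
          rw [hc'cov v]; simp [hh']
        obtain ⟨S', hS'mem, hS'ne⟩ : ∃ S ∈ Finset.univ.filter (fun S : Finset V => v ∈ S), c' S ≠ 0 := by
          apply Finset.exists_ne_zero_of_sum_ne_zero
          omega
        have hvS' : v ∈ S' := (Finset.mem_filter.mp hS'mem).2
        have hS'st : IsStableSet H (↑S' : Set V) := hc'st S' hS'ne
        have hS'h' : ∀ u ∈ S', 1 ≤ h' u := by
          intro u hu
          rw [← hc'cov u]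
          calc 1 ≤ c' S' := Nat.one_le_iff_ne_zero.mpr hS'ne
            _ ≤ _ := Finset.single_le_sum (fun _ _ => Nat.zero_le _)
                (Finset.mem_filter.mpr ⟨Finset.mem_univ _, hu⟩)
        have hS'h : ∀ u ∈ S', 1 ≤ h u := fun u hu => le_trans (hS'h' u hu) (hh'le u)
        set h₁ : V → ℕ := fun u => h u - (if u ∈ S' then 1 else 0) with hh₁
        have hpt₁ : ∀ u, h₁ u + (if u ∈ S' then 1 else 0) = h u := by
          intro u
          by_cases hu : u ∈ S'
          · have := hS'h u hu
            simp only [hh₁, hu, if_true]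
            omega
          · simp [hh₁, hu]
        have hsum₁Q : ∀ Q : Finset V, ∑ u ∈ Q, h₁ u + (Q ∩ S').card = ∑ u ∈ Q, h u := by
          intro Q
          rw [← Finset.sum_congr rfl fun u (_ : u ∈ Q) => hpt₁ u, Finset.sum_add_distrib,
            Finset.sum_ite_mem, Finset.sum_const, smul_eq_mul, mul_one]
        have hsum₁ : ∑ u, h₁ u + S'.card = ∑ u, h u := by
          have := hsum₁Q Finset.univ
          rwa [Finset.univ_inter] at this
        have hS'card : 1 ≤ S'.card := Finset.card_pos.mpr ⟨v, hvS'⟩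
        -- key bound on omegaW H h₁
        have homega1 : omegaW H h₁ ≤ omegaW H h - 1 := by
          apply Finset.sup_le
          intro Q hQ
          have hQle : ∑ u ∈ Q, h u ≤ omegaW H h := le_omegaW hQ h
          have hQle' : ∑ u ∈ Q, h' u ≤ omegaW H h' := le_omegaW hQ h'
          have h₁Q := hsum₁Q Q
          by_cases hvQ : v ∈ Q
          · have hQh : ∑ u ∈ Q, h u = ∑ u ∈ Q, h' u + 1 := by rw [hsumQ Q]; simp [hvQ]
            have htQ : 1 ≤ (Q ∩ S').card :=
              Finset.card_pos.mpr ⟨v, Finset.mem_inter.mpr ⟨hvQ, hvS'⟩⟩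
            omega
          · have hQh : ∑ u ∈ Q, h u = ∑ u ∈ Q, h' u := by rw [hsumQ Q]; simp [hvQ]
            by_cases hmax : ∑ u ∈ Q, h' u = omegaW H h'
            · -- every class of c' meets Q; in particular S' does
              have hswap : ∑ u ∈ Q, h' u = ∑ S : Finset V, (Q ∩ S).card • c' S := by
                rw [← Finset.sum_congr rfl fun u (_ : u ∈ Q) => hc'cov u]
                exact swap_sum Q Finset.univ c'
              have hterm : ∀ S : Finset V, (Q ∩ S).card • c' S ≤ c' S := by
                intro S
                by_cases hS0 : c' S = 0
                · simp [hS0]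
                · have := clique_inter_stable (mem_cl.mp hQ) (hc'st S hS0)
                  calc (Q ∩ S).card • c' S ≤ 1 • c' S :=
                      smul_le_smul_of_nonneg_right this (Nat.zero_le _)
                    _ = c' S := one_smul _ _
              have ht : 1 ≤ (Q ∩ S').card := by
                by_contra h0
                have h00 : (Q ∩ S').card = 0 := by omega
                have hlt : ∑ S : Finset V, (Q ∩ S).card • c' S < ∑ S : Finset V, c' S := by
                  apply Finset.sum_lt_sum (fun S _ => hterm S)
                  exact ⟨S', Finset.mem_univ _, by
                    rw [h00, zero_smul]; exact Nat.pos_of_ne_zero hS'ne⟩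
                have hlt2 : ∑ u ∈ Q, h' u < ∑ S : Finset V, c' S := by rw [hswap]; exact hlt
                omega
              omega
            · omega
        obtain ⟨c₁, hc₁⟩ := ih (n - 1) (by omega) h₁ (by omega)
        obtain ⟨hc₁st, hc₁cov, hc₁tot⟩ := hc₁
        refine ⟨fun S => c₁ S + if S = S' then 1 else 0, ?_, ?_, ?_⟩
        · intro S hS0
          by_cases hS1 : c₁ S = 0
          · have : S = S' := by by_contra hne; simp [hS1, hne] at hS0
            rw [this]; exact hS'st
          · exact hc₁st S hS1
        · intro u
          rw [Finset.sum_add_distrib, hc₁cov u,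
            Finset.sum_ite_eq' _ S' (fun _ => 1)]
          have : S' ∈ Finset.univ.filter (fun S : Finset V => u ∈ S) ↔ u ∈ S' := by simp
          rw [← hpt₁ u]
          by_cases hu : u ∈ S' <;> simp [hu]
        · rw [Finset.sum_add_distrib, Finset.sum_ite_eq' _ S' (fun _ => 1)]
          simp only [Finset.mem_univ, if_true]
          omega
      · -- Case A
        push_neg at hcase
        obtain ⟨c', hc'⟩ := ih (n - 1) (by omega) h' (by omega)
        obtain ⟨hc'st, hc'cov, hc'tot⟩ := hc'
        refine ⟨fun S => c' S + if S = {v} then 1 else 0, ?_, ?_, ?_⟩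
        · intro S hS0
          by_cases hS1 : c' S = 0
          · have : S = {v} := by by_contra hne; simp [hS1, hne] at hS0
            rw [this]
            intro a ha b hb hne
            simp only [Finset.coe_singleton, Set.mem_singleton_iff] at ha hb
            exact absurd (ha.trans hb.symm) hne
          · exact hc'st S hS1
        · intro u
          rw [Finset.sum_add_distrib, hc'cov u,
            Finset.sum_ite_eq' _ ({v} : Finset V) (fun _ => 1)]
          by_cases hu : u = v
          · subst hu; simp [hh']; omega
          · simp [hh', hu, Ne.symm hu]
        · rw [Finset.sum_add_distrib, Finset.sum_ite_eq' _ ({v} : Finset V) (fun _ => 1)]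
          simp only [Finset.mem_univ, if_true]
          omega

theorem hbase_of_perfect (G : SimpleGraph V) (hG : IsPerfect G) (T : Finset V) :
    ∃ c, Cov G (indC T) c := by
  classical
  set k := (G.induce (↑T : Set V)).cliqueNum with hk
  have hcol : (G.induce (↑T : Set V)).Colorable k := by
    rw [← SimpleGraph.chromaticNumber_le_iff_colorable]
    exact le_of_eq (hG ↑T)
  obtain ⟨C⟩ := hcol
  haveI : Fintype (↑T : Set V) := FinsetCoe.fintype T
  set cls : Fin k → Finset V :=
    fun i => (Finset.univ.filter fun x : (↑T : Set V) => C x = i).image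
      Subtype.val with hcls
  have hmem_cls : ∀ (u : V) (i : Fin k), u ∈ cls i ↔ ∃ hu : u ∈ (↑T : Set V), C ⟨u, hu⟩ = i := by
    intro u i
    simp only [hcls, Finset.mem_image, Finset.mem_filter, Finset.mem_univ, true_and]
    constructor
    · rintro ⟨x, hx, rfl⟩
      exact ⟨x.2, hx⟩
    · rintro ⟨hu, hC⟩
      exact ⟨⟨u, hu⟩, hC, rfl⟩
  have hclsT : ∀ i, cls i ⊆ T := by
    intro i u hu
    obtain ⟨hu', _⟩ := (hmem_cls u i).mp hu
    simpa using hu'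
  set c : Finset V → ℕ := fun S => (Finset.univ.filter fun i : Fin k => cls i = S).card with hc
  refine ⟨c, ?_, ?_, ?_⟩
  · -- stability of classes
    intro S hS0
    have : ∃ i, cls i = S := by
      obtain ⟨i, hi⟩ := Finset.card_pos.mp (Nat.pos_of_ne_zero hS0)
      exact ⟨i, (Finset.mem_filter.mp hi).2⟩
    obtain ⟨i, rfl⟩ := this
    intro a ha b hb hne hadj
    rw [Finset.mem_coe, hmem_cls] at ha hb
    obtain ⟨hau, haC⟩ := ha
    obtain ⟨hbu, hbC⟩ := hb
    have hadj' : (G.induce (↑T : Set V)).Adj ⟨a, hau⟩ ⟨b, hbu⟩ := by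
      simp only [SimpleGraph.comap_adj, Function.Embedding.coe_subtype]
      exact hadj
    exact C.valid hadj' (haC.trans hbC.symm)
  · -- exact cover
    intro u
    have hfib : ∑ S ∈ Finset.univ.filter (fun S : Finset V => u ∈ S), c S
        = (Finset.univ.filter fun i : Fin k => u ∈ cls i).card := by
      rw [Finset.card_eq_sum_card_fiberwise
        (f := cls) (t := Finset.univ.filter (fun S : Finset V => u ∈ S))
        (fun i hi => by
          rw [Finset.mem_coe, Finset.mem_filter] at hi ⊢
          exact ⟨Finset.mem_univ _, hi.2⟩)]
      refine Finset.sum_congr rfl fun S hS => ?_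
      rw [Finset.mem_filter] at hS
      apply congrArg Finset.card
      ext i
      simp only [Finset.mem_filter, Finset.mem_univ, true_and]
      constructor
      · intro h; exact ⟨by rw [h]; exact hS.2, h⟩
      · intro h; exact h.2
    rw [hfib]
    by_cases hu : u ∈ T
    · have hu' : u ∈ (↑T : Set V) := by simpa using hu
      have : (Finset.univ.filter fun i : Fin k => u ∈ cls i) = {C ⟨u, hu'⟩} := by
        ext i
        simp only [Finset.mem_filter, Finset.mem_univ, true_and, Finset.mem_singleton,
          hmem_cls]
        constructor
        · rintro ⟨_, hC⟩; exact hC.symm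
        · intro h; exact ⟨hu', h.symm⟩
      rw [this]
      simp [indC, hu]
    · have : (Finset.univ.filter fun i : Fin k => u ∈ cls i) = ∅ := by
        ext i
        simp only [Finset.mem_filter, Finset.mem_univ, true_and, Finset.notMem_empty,
          iff_false]
        intro h
        exact hu (hclsT i h)
      rw [this]
      simp [indC, hu]
  · -- total count is k ≤ omegaW
    have htot : ∑ S : Finset V, c S = k := by
      rw [← Finset.card_eq_sum_card_fiberwise (f := cls) (t := Finset.univ)
        (fun i _ => Finset.mem_univ _)]
      simp
    rw [htot]
    obtain ⟨s, hs⟩ := (G.induce (↑T : Set V)).exists_isNClique_cliqueNum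
    set Q : Finset V := s.image Subtype.val with hQ
    have hQT : Q ⊆ T := by
      intro u hu
      rw [hQ, Finset.mem_image] at hu
      obtain ⟨x, _, rfl⟩ := hu
      simpa using x.2
    have hQcl : Q ∈ cl G := by
      rw [mem_cl]
      intro a ha b hb hne
      rw [Finset.mem_coe, hQ, Finset.mem_image] at ha hb
      obtain ⟨x, hx, rfl⟩ := ha
      obtain ⟨y, hy, rfl⟩ := hb
      have hxy : x ≠ y := fun h => hne (by rw [h])
      have := hs.1 (Finset.mem_coe.mpr hx) (Finset.mem_coe.mpr hy) hxy
      simpa using this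
    have hQcard : Q.card = k := by
      rw [hQ, Finset.card_image_of_injective _ Subtype.val_injective, hs.2]
    have hQsum : ∑ v ∈ Q, indC T v = Q.card := by
      rw [Finset.card_eq_sum_ones]
      refine Finset.sum_congr rfl fun v hv => ?_
      simp [indC, hQT hv]
    calc k = ∑ v ∈ Q, indC T v := by rw [hQsum, hQcard]
      _ ≤ omegaW G (indC T) := le_omegaW hQcl _

lemma sum_indC (T S : Finset V) : ∑ v ∈ S, indC T v = (S ∩ T).card := by
  simp only [indC]
  rw [Finset.sum_ite_mem, Finset.sum_const, smul_eq_mul, mul_one]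

lemma cov_empty (H : SimpleGraph V) : ∃ c, Cov H (indC (∅ : Finset V)) c := by
  refine ⟨fun _ => 0, fun S hS => absurd rfl hS, fun v => by simp [indC], by simp⟩

theorem key_clique (G : SimpleGraph V) (hG : IsPerfect G) (T : Finset V) (hT : T.Nonempty) :
    ∃ Q : Finset V, Q ⊆ T ∧ G.IsClique (↑Q : Set V) ∧ Q.Nonempty ∧
      ∀ S : Finset V, S ⊆ T → IsStableSet G (↑S : Set V) →
        S.card = omegaW Gᶜ (indC T) → (S ∩ Q).Nonempty := by
  classical
  set α := omegaW Gᶜ (indC T) with hα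
  obtain ⟨t0, ht0⟩ := hT
  have hα1 : 1 ≤ α := by
    have h1 := le_omegaW (singleton_mem_cl Gᶜ t0) (indC T)
    simpa [indC, ht0] using h1
  by_contra hcon
  push_neg at hcon
  set 𝒦 := Finset.univ.filter
    (fun Q : Finset V => Q ⊆ T ∧ G.IsClique (↑Q : Set V) ∧ Q.Nonempty) with h𝒦
  have hchoice : ∀ Q : Finset V, ∃ S : Finset V, Q ∈ 𝒦 →
      S ⊆ T ∧ IsStableSet G (↑S : Set V) ∧ S.card = α ∧ S ∩ Q = ∅ := by
    intro Q
    by_cases hQ : Q ∈ 𝒦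
    · rw [h𝒦, Finset.mem_filter] at hQ
      obtain ⟨S, h1, h2, h3, h4⟩ := hcon Q hQ.2.1 hQ.2.2.1 hQ.2.2.2
      exact ⟨S, fun _ => ⟨h1, h2, h3, h4⟩⟩
    · exact ⟨∅, fun h => absurd h hQ⟩
  choose f hf using hchoice
  set h : V → ℕ := fun v => ∑ Q ∈ 𝒦, if v ∈ f Q then 1 else 0 with hh
  have hk1 : 1 ≤ 𝒦.card := by
    refine Finset.card_pos.mpr ⟨{t0}, ?_⟩
    rw [h𝒦, Finset.mem_filter]
    refine ⟨Finset.mem_univ _, Finset.singleton_subset_iff.mpr ht0, ?_, Finset.singleton_nonempty _⟩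
    intro a ha b hb hne
    simp only [Finset.coe_singleton, Set.mem_singleton_iff] at ha hb
    exact absurd (ha.trans hb.symm) hne
  have hsupp : ∀ v, h v ≠ 0 → v ∈ T := by
    intro v hv
    obtain ⟨Q, hQ, hQv⟩ := Finset.exists_ne_zero_of_sum_ne_zero hv
    have : v ∈ f Q := by by_contra h0; simp [h0] at hQv
    exact (hf Q hQ).1 this
  have hA : ∑ v, h v = 𝒦.card * α := by
    rw [hh]
    rw [Finset.sum_comm]
    have : ∀ Q ∈ 𝒦, ∑ v : V, (if v ∈ f Q then 1 else 0) = α := by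
      intro Q hQ
      rw [Finset.sum_ite_mem, Finset.univ_inter, Finset.sum_const, smul_eq_mul, mul_one]
      exact (hf Q hQ).2.2.1
    rw [Finset.sum_congr rfl this, Finset.sum_const, smul_eq_mul]
  have hB : omegaW G h ≤ 𝒦.card - 1 := by
    apply Finset.sup_le
    intro Q₀ hQ₀
    have hsw : ∑ v ∈ Q₀, h v = ∑ Q ∈ 𝒦, (Q₀ ∩ f Q).card := by
      rw [hh, Finset.sum_comm]
      refine Finset.sum_congr rfl fun Q _ => ?_
      rw [Finset.sum_ite_mem, Finset.sum_const, smul_eq_mul, mul_one]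
    rw [hsw]
    by_cases hQ1 : (Q₀ ∩ T).Nonempty
    · have hQ₁mem : Q₀ ∩ T ∈ 𝒦 := by
        rw [h𝒦, Finset.mem_filter]
        exact ⟨Finset.mem_univ _, Finset.inter_subset_right,
          (mem_cl.mp hQ₀).subset (by exact_mod_cast Finset.inter_subset_left), hQ1⟩
      have hterm : ∀ Q ∈ 𝒦, (Q₀ ∩ f Q).card ≤ 1 := fun Q hQ =>
        clique_inter_stable (mem_cl.mp hQ₀) (hf Q hQ).2.1
      have hzero : (Q₀ ∩ f (Q₀ ∩ T)).card = 0 := by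
        rw [Finset.card_eq_zero, Finset.eq_empty_iff_forall_notMem]
        intro x hx
        rw [Finset.mem_inter] at hx
        have hxT : x ∈ T := (hf _ hQ₁mem).1 hx.2
        have h4 := (hf _ hQ₁mem).2.2.2
        have : x ∈ f (Q₀ ∩ T) ∩ (Q₀ ∩ T) :=
          Finset.mem_inter.mpr ⟨hx.2, Finset.mem_inter.mpr ⟨hx.1, hxT⟩⟩
        rw [h4] at this
        exact absurd this (Finset.notMem_empty x)
      calc ∑ Q ∈ 𝒦, (Q₀ ∩ f Q).card
          = ∑ Q ∈ 𝒦.erase (Q₀ ∩ T), (Q₀ ∩ f Q).card + (Q₀ ∩ f (Q₀ ∩ T)).card := by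
            rw [Finset.sum_erase_add _ _ hQ₁mem]
        _ = ∑ Q ∈ 𝒦.erase (Q₀ ∩ T), (Q₀ ∩ f Q).card := by rw [hzero, add_zero]
        _ ≤ ∑ Q ∈ 𝒦.erase (Q₀ ∩ T), 1 :=
            Finset.sum_le_sum fun Q hQ => hterm Q (Finset.mem_of_mem_erase hQ)
        _ = (𝒦.erase (Q₀ ∩ T)).card := by rw [Finset.sum_const, smul_eq_mul, mul_one]
        _ = 𝒦.card - 1 := Finset.card_erase_of_mem hQ₁mem
    · rw [Finset.not_nonempty_iff_eq_empty] at hQ1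
      have : ∀ Q ∈ 𝒦, (Q₀ ∩ f Q).card = 0 := by
        intro Q hQ
        rw [Finset.card_eq_zero, Finset.eq_empty_iff_forall_notMem]
        intro x hx
        rw [Finset.mem_inter] at hx
        have : x ∈ Q₀ ∩ T := Finset.mem_inter.mpr ⟨hx.1, (hf Q hQ).1 hx.2⟩
        rw [hQ1] at this
        exact absurd this (Finset.notMem_empty x)
      rw [Finset.sum_congr rfl this]
      simp
  obtain ⟨c, hc⟩ := wcover G (fun T' => hbase_of_perfect G hG T') (∑ v, h v) h le_rfl
  obtain ⟨hcst, hccov, hctot⟩ := hc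
  have hD : ∑ v, h v = ∑ S : Finset V, S.card • c S := by
    calc ∑ v, h v = ∑ v : V, ∑ S ∈ Finset.univ.filter (fun S : Finset V => v ∈ S), c S :=
          (Finset.sum_congr rfl fun v _ => (hccov v).symm)
      _ = ∑ S : Finset V, (Finset.univ ∩ S).card • c S := swap_sum Finset.univ Finset.univ c
      _ = ∑ S : Finset V, S.card • c S := by
          refine Finset.sum_congr rfl fun S _ => ?_
          rw [Finset.univ_inter]
  have hE : ∀ S : Finset V, c S ≠ 0 → S.card ≤ α := by
    intro S hS0
    have hstable := hcst S hS0
    have hSsubT : S ⊆ T := by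
      intro v hv
      apply hsupp v
      rw [← hccov v]
      have h1 : 1 ≤ c S := Nat.one_le_iff_ne_zero.mpr hS0
      have h2 : c S ≤ ∑ S' ∈ Finset.univ.filter (fun S' : Finset V => v ∈ S'), c S' :=
        Finset.single_le_sum (fun _ _ => Nat.zero_le _)
          (Finset.mem_filter.mpr ⟨Finset.mem_univ _, hv⟩)
      omega
    have hmem : S ∈ cl Gᶜ := mem_cl.mpr (isClique_compl_iff.mpr hstable)
    have : ∑ v ∈ S, indC T v = S.card := by
      rw [Finset.card_eq_sum_ones]
      exact Finset.sum_congr rfl fun v hv => by simp [indC, hSsubT hv]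
    calc S.card = ∑ v ∈ S, indC T v := this.symm
      _ ≤ α := le_omegaW hmem _
  have hF : ∑ S : Finset V, S.card • c S ≤ (∑ S : Finset V, c S) * α := by
    rw [Finset.sum_mul]
    refine Finset.sum_le_sum fun S _ => ?_
    by_cases hS0 : c S = 0
    · simp [hS0]
    · rw [smul_eq_mul, mul_comm]
      exact Nat.mul_le_mul_left _ (hE S hS0)
  have hchain : 𝒦.card * α ≤ (𝒦.card - 1) * α := by
    calc 𝒦.card * α = ∑ v, h v := hA.symm
      _ = ∑ S : Finset V, S.card • c S := hD
      _ ≤ (∑ S : Finset V, c S) * α := hF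
      _ ≤ (𝒦.card - 1) * α := Nat.mul_le_mul_right _ (le_trans hctot hB)
  have hk : 𝒦.card = (𝒦.card - 1) + 1 := by omega
  have hchain2 : (𝒦.card - 1) * α + α ≤ (𝒦.card - 1) * α := by
    calc (𝒦.card - 1) * α + α = ((𝒦.card - 1) + 1) * α := by ring
      _ = 𝒦.card * α := by rw [← hk]
      _ ≤ _ := hchain
  omega

theorem hbase_compl (G : SimpleGraph V) (hG : IsPerfect G) :
    ∀ T : Finset V, ∃ c, Cov Gᶜ (indC T) c := by
  suffices H : ∀ n (T : Finset V), T.card ≤ n → ∃ c, Cov Gᶜ (indC T) c from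
    fun T => H T.card T le_rfl
  intro n
  induction n with
  | zero =>
    intro T hT
    rw [Nat.le_zero, Finset.card_eq_zero] at hT
    rw [hT]
    exact cov_empty Gᶜ
  | succ n ih =>
    intro T hT
    by_cases hTne : T.Nonempty
    · obtain ⟨Q, hQT, hQcl, hQne, hQkey⟩ := key_clique G hG T hTne
      set T' := T \ Q with hT'
      have hT'card : T'.card ≤ n := by
        have hlt : T'.card < T.card := Finset.card_lt_card (Finset.sdiff_ssubset hQT hQne)
        omega
      obtain ⟨c', hc'st, hc'cov, hc'tot⟩ := ih T' hT'card
      have hαlt : omegaW Gᶜ (indC T') + 1 ≤ omegaW Gᶜ (indC T) := by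
        obtain ⟨S₀, hS₀mem, hS₀eq⟩ := Finset.exists_mem_eq_sup (cl Gᶜ)
          ⟨∅, empty_mem_cl _⟩ (fun S => ∑ v ∈ S, indC T' v)
        set S₁ := S₀ ∩ T' with hS₁
        have hcard : omegaW Gᶜ (indC T') = S₁.card := by
          have h0 : omegaW Gᶜ (indC T') = ∑ v ∈ S₀, indC T' v := hS₀eq
          rw [h0, sum_indC]
        have hS₀stable : IsStableSet G (↑S₀ : Set V) :=
          isClique_compl_iff.mp (mem_cl.mp hS₀mem)
        have hS₁stable : IsStableSet G (↑S₁ : Set V) :=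
          hS₀stable.mono (Finset.coe_subset.mpr Finset.inter_subset_left)
        have hS₁T : S₁ ⊆ T := Finset.inter_subset_right.trans (Finset.sdiff_subset)
        have hS₁mem : S₁ ∈ cl Gᶜ := mem_cl.mpr (isClique_compl_iff.mpr hS₁stable)
        have hle : S₁.card ≤ omegaW Gᶜ (indC T) := by
          have h1 : ∑ v ∈ S₁, indC T v = S₁.card := by
            rw [sum_indC, Finset.inter_eq_left.mpr hS₁T]
          rw [← h1]
          exact le_omegaW hS₁mem _
        have hne : S₁.card ≠ omegaW Gᶜ (indC T) := by
          intro heq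
          obtain ⟨x, hx⟩ := hQkey S₁ hS₁T hS₁stable heq
          rw [Finset.mem_inter] at hx
          have hxT' : x ∈ T' := (Finset.mem_inter.mp hx.1).2
          rw [hT', Finset.mem_sdiff] at hxT'
          exact hxT'.2 hx.2
        omega
      refine ⟨fun S => c' S + if S = Q then 1 else 0, ?_, ?_, ?_⟩
      · intro S hS0
        by_cases hS1 : c' S = 0
        · have : S = Q := by by_contra hne; simp [hS1, hne] at hS0
          rw [this]
          exact isStableSet_compl_iff.mpr hQcl
        · exact hc'st S hS1
      · intro u
        rw [Finset.sum_add_distrib, hc'cov u, Finset.sum_ite_eq' _ Q (fun _ => 1)]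
        by_cases huQ : u ∈ Q
        · have huT : u ∈ T := hQT huQ
          have huT' : u ∉ T' := by simp [hT', huQ]
          simp [indC, huT, huT', huQ]
        · by_cases huT : u ∈ T
          · have huT' : u ∈ T' := by simp [hT', huT, huQ]
            simp [indC, huT, huT', huQ]
          · have huT' : u ∉ T' := by simp [hT', huT]
            simp [indC, huT, huT', huQ]
      · rw [Finset.sum_add_distrib, Finset.sum_ite_eq' _ Q (fun _ => 1)]
        simp only [Finset.mem_univ, if_true]
        omega
    · rw [Finset.not_nonempty_iff_eq_empty] at hTne
      rw [hTne]
      exact cov_empty Gᶜ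

end PGLP

open PGLP

theorem perfect_graph_lp_duality
    {V : Type*} [Fintype V] (G : SimpleGraph V) (hG : IsPerfect G)
    (w : V → ℝ) (hw : ∀ v, 0 ≤ w v) :
    -- the minimum of `Σ_Q y_Q` over dual-feasible nonnegative `y` is attained and
    -- equals `worth(G)`; in particular some dual-feasible `y` achieves `worth(G)`
    IsLeast
      {s : ℝ | ∃ y : Finset V → ℝ,
        (∀ Q ∈ cliquesOf G, 0 ≤ y Q) ∧
        (∀ v : V, w v ≤ ∑ Q ∈ (cliquesOf G).filter (fun Q => v ∈ Q), y Q) ∧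
        s = ∑ Q ∈ cliquesOf G, y Q}
      (stableWorth G w Set.univ) := by
  classical
  -- the maximum stable-set weight W
  set 𝒮 : Finset (Finset V) := Finset.univ.filter
    (fun S : Finset V => IsStableSet G (↑S : Set V)) with h𝒮
  have h𝒮ne : 𝒮.Nonempty := ⟨∅, by rw [h𝒮, Finset.mem_filter]; exact ⟨Finset.mem_univ _, by simp [IsStableSet]⟩⟩
  set F : Finset ℝ := 𝒮.image (fun S : Finset V => ∑ v ∈ S, w v) with hF
  have hFne : F.Nonempty := h𝒮ne.image _
  set W : ℝ := F.max' hFne with hW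
  have hWorth : stableWorth G w Set.univ = W := by
    have hset : {x : ℝ | ∃ S : Finset V, (↑S : Set V) ⊆ Set.univ ∧ IsStableSet G (↑S : Set V)
        ∧ x = ∑ v ∈ S, w v} = (↑F : Set ℝ) := by
      ext x
      constructor
      · rintro ⟨S, -, hst, rfl⟩
        refine Finset.mem_coe.mpr ?_
        rw [hF, Finset.mem_image]
        exact ⟨S, by rw [h𝒮, Finset.mem_filter]; exact ⟨Finset.mem_univ _, hst⟩, rfl⟩
      · intro hx
        rw [Finset.mem_coe, hF, Finset.mem_image] at hx
        obtain ⟨S, hS, rfl⟩ := hx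
        rw [h𝒮, Finset.mem_filter] at hS
        exact ⟨S, by simp, hS.2, rfl⟩
    rw [stableWorth, hset, hFne.csSup_eq_max']
  have hWmem : ∃ S : Finset V, IsStableSet G (↑S : Set V) ∧ ∑ v ∈ S, w v = W := by
    have hmem : W ∈ F := F.max'_mem hFne
    rw [hF, Finset.mem_image] at hmem
    obtain ⟨S, hS, hSW⟩ := hmem
    rw [h𝒮, Finset.mem_filter] at hS
    exact ⟨S, hS.2, hSW⟩
  have hWle : ∀ S : Finset V, IsStableSet G (↑S : Set V) → ∑ v ∈ S, w v ≤ W := by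
    intro S hS
    apply F.le_max'
    rw [hF, Finset.mem_image]
    exact ⟨S, by rw [h𝒮, Finset.mem_filter]; exact ⟨Finset.mem_univ _, hS⟩, rfl⟩
  have hW0 : (0 : ℝ) ≤ W := by
    have hemp : IsStableSet G ((↑(∅ : Finset V)) : Set V) := by
      simp [IsStableSet]
    have := hWle ∅ hemp
    simpa using this
  -- weak duality
  have weak : ∀ y : Finset V → ℝ, (∀ Q ∈ cliquesOf G, 0 ≤ y Q) →
      (∀ v, w v ≤ ∑ Q ∈ (cliquesOf G).filter (fun Q => v ∈ Q), y Q) →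
      W ≤ ∑ Q ∈ cliquesOf G, y Q := by
    intro y hy0 hyf
    obtain ⟨S, hSst, hSW⟩ := hWmem
    calc W = ∑ v ∈ S, w v := hSW.symm
      _ ≤ ∑ v ∈ S, ∑ Q ∈ (cliquesOf G).filter (fun Q => v ∈ Q), y Q :=
          Finset.sum_le_sum fun v _ => hyf v
      _ = ∑ Q ∈ cliquesOf G, (S ∩ Q).card • y Q := swap_sum S (cliquesOf G) y
      _ ≤ ∑ Q ∈ cliquesOf G, y Q := by
          refine Finset.sum_le_sum fun Q hQ => ?_
          have hQcl : G.IsClique (↑Q : Set V) :=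
            (Finset.mem_filter.mp hQ).2.2
          have h1 : (S ∩ Q).card ≤ 1 := by
            rw [Finset.inter_comm]
            exact clique_inter_stable hQcl hSst
          interval_cases h : (S ∩ Q).card
          · simp [hy0 Q hQ]
          · simp
  -- feasible solutions with value close to W
  have feas : ∀ d : ℕ, 1 ≤ d → ∃ y : Finset V → ℝ,
      (∀ Q, 0 ≤ y Q) ∧
      (∀ v, w v ≤ ∑ Q ∈ (cliquesOf G).filter (fun Q => v ∈ Q), y Q) ∧
      ∑ Q ∈ cliquesOf G, y Q ≤ W + (Fintype.card V : ℝ) / d := by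
    intro d hd
    have hd0 : (0 : ℝ) < d := by exact_mod_cast hd
    set h : V → ℕ := fun v => ⌈w v * d⌉₊ with hh
    obtain ⟨c, hcst, hccov, hctot⟩ :=
      wcover Gᶜ (hbase_compl G hG) (∑ v, h v) h le_rfl
    have hcclique : ∀ Q : Finset V, c Q ≠ 0 → G.IsClique (↑Q : Set V) :=
      fun Q hQ => isStableSet_compl_iff.mp (hcst Q hQ)
    set y : Finset V → ℝ := fun Q => if Q ∈ cliquesOf G then (c Q : ℝ) / d else 0 with hy
    refine ⟨y, ?_, ?_, ?_⟩
    · intro Q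
      simp only [hy]
      split
      · positivity
      · exact le_rfl
    · intro v
      have hsub : ∑ Q ∈ (cliquesOf G).filter (fun Q => v ∈ Q), c Q
          = ∑ Q ∈ Finset.univ.filter (fun Q : Finset V => v ∈ Q), c Q := by
        apply Finset.sum_subset
        · intro Q hQ
          rw [Finset.mem_filter] at hQ ⊢
          exact ⟨Finset.mem_univ _, hQ.2⟩
        · intro Q hQ hQn
          by_contra hc0
          apply hQn
          rw [Finset.mem_filter] at hQ ⊢
          refine ⟨?_, hQ.2⟩
          rw [cliquesOf, Finset.mem_filter]
          exact ⟨Finset.mem_univ _, ⟨v, hQ.2⟩, hcclique Q hc0⟩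
      have hyeq : ∑ Q ∈ (cliquesOf G).filter (fun Q => v ∈ Q), y Q
          = ((∑ Q ∈ (cliquesOf G).filter (fun Q => v ∈ Q), c Q : ℕ) : ℝ) / d := by
        rw [Nat.cast_sum, Finset.sum_div]
        refine Finset.sum_congr rfl fun Q hQ => ?_
        have : Q ∈ cliquesOf G := (Finset.mem_filter.mp hQ).1
        simp only [hy]
        simp [this]
      rw [hyeq, hsub, hccov v]
      rw [le_div_iff₀ hd0]
      calc w v * d ≤ (⌈w v * d⌉₊ : ℝ) := Nat.le_ceil _
        _ = (h v : ℝ) := by rw [hh]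
    · -- total bound
      have hcsub : ∑ Q ∈ cliquesOf G, c Q ≤ ∑ Q : Finset V, c Q :=
        Finset.sum_le_sum_of_subset (Finset.subset_univ _)
      have homega : ((omegaW Gᶜ h : ℕ) : ℝ) ≤ W * d + Fintype.card V := by
        obtain ⟨S₀, hS₀mem, hS₀eq⟩ := Finset.exists_mem_eq_sup (cl Gᶜ)
          ⟨∅, empty_mem_cl _⟩ (fun S => ∑ v ∈ S, h v)
        have h0 : omegaW Gᶜ h = ∑ v ∈ S₀, h v := hS₀eq
        have hS₀st : IsStableSet G (↑S₀ : Set V) := isClique_compl_iff.mp (mem_cl.mp hS₀mem)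
        rw [h0]
        push_cast
        calc ∑ v ∈ S₀, (h v : ℝ) ≤ ∑ v ∈ S₀, (w v * d + 1) := by
              refine Finset.sum_le_sum fun v _ => ?_
              rw [hh]
              exact (Nat.ceil_lt_add_one (mul_nonneg (hw v) (Nat.cast_nonneg d))).le
          _ = (∑ v ∈ S₀, w v) * d + S₀.card := by
              rw [Finset.sum_add_distrib, Finset.sum_const, ← Finset.sum_mul]
              push_cast; ring
          _ ≤ W * d + Fintype.card V := by
              have h1 : (∑ v ∈ S₀, w v) * d ≤ W * d :=
                mul_le_mul_of_nonneg_right (hWle S₀ hS₀st) hd0.le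
              have h2 : (S₀.card : ℝ) ≤ Fintype.card V := by
                exact_mod_cast Finset.card_le_univ S₀
              linarith
      have hytot : ∑ Q ∈ cliquesOf G, y Q = ((∑ Q ∈ cliquesOf G, c Q : ℕ) : ℝ) / d := by
        rw [Nat.cast_sum, Finset.sum_div]
        refine Finset.sum_congr rfl fun Q hQ => ?_
        simp only [hy]; simp [hQ]
      rw [hytot]
      rw [div_le_iff₀ hd0]
      have hc1 : ((∑ Q ∈ cliquesOf G, c Q : ℕ) : ℝ) ≤ ((omegaW Gᶜ h : ℕ) : ℝ) := by
        exact_mod_cast le_trans hcsub hctot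
      calc ((∑ Q ∈ cliquesOf G, c Q : ℕ) : ℝ) ≤ W * d + Fintype.card V :=
            le_trans hc1 homega
        _ = (W + (Fintype.card V : ℝ) / d) * d := by field_simp
  -- compactness: attain the minimum
  set C : ℝ := W + (Fintype.card V : ℝ) + 1 with hC
  have hCW : W + (Fintype.card V : ℝ) ≤ C := by rw [hC]; linarith
  set D : Set (Finset V → ℝ) := {y | (∀ Q, y Q ∈ Set.Icc (0:ℝ) C) ∧
      (∀ v, w v ≤ ∑ Q ∈ (cliquesOf G).filter (fun Q => v ∈ Q), y Q)} with hD
  have hmemD : ∀ d : ℕ, 1 ≤ d → ∀ y : Finset V → ℝ, (∀ Q, 0 ≤ y Q) →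
      (∀ v, w v ≤ ∑ Q ∈ (cliquesOf G).filter (fun Q => v ∈ Q), y Q) →
      (∑ Q ∈ cliquesOf G, y Q ≤ W + (Fintype.card V : ℝ) / d) →
      (fun Q => if Q ∈ cliquesOf G then y Q else 0) ∈ D := by
    intro d hd y hy0 hyf hyt
    have hd0 : (0:ℝ) < d := by exact_mod_cast hd
    have hd1 : (1:ℝ) ≤ d := by exact_mod_cast hd
    have hdiv : (Fintype.card V : ℝ) / d ≤ Fintype.card V := by
      rw [div_le_iff₀ hd0]
      nlinarith [Nat.cast_nonneg (α := ℝ) (Fintype.card V)]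
    constructor
    · intro Q
      simp only [Set.mem_Icc]
      constructor
      · split
        · exact hy0 Q
        · exact le_rfl
      · split
        · rename_i hQ
          calc y Q ≤ ∑ Q' ∈ cliquesOf G, y Q' :=
                Finset.single_le_sum (fun Q' _ => hy0 Q') hQ
            _ ≤ W + (Fintype.card V : ℝ) / d := hyt
            _ ≤ C := by linarith
        · have h0C : (0:ℝ) ≤ C := by
            have h00 : (0:ℝ) ≤ (Fintype.card V : ℝ) := Nat.cast_nonneg _
            rw [hC]; linarith
          linarith [h0C]
    · intro v
      calc w v ≤ ∑ Q ∈ (cliquesOf G).filter (fun Q => v ∈ Q), y Q := hyf v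
        _ = ∑ Q ∈ (cliquesOf G).filter (fun Q => v ∈ Q),
              (if Q ∈ cliquesOf G then y Q else 0) := by
            refine Finset.sum_congr rfl fun Q hQ => ?_
            have : Q ∈ cliquesOf G := (Finset.mem_filter.mp hQ).1
            simp [this]
  have hDcpt : IsCompact D := by
    have h1 : IsCompact (Set.univ.pi fun _ : Finset V => Set.Icc (0:ℝ) C) :=
      isCompact_univ_pi fun _ => isCompact_Icc
    have h2 : IsClosed {y : Finset V → ℝ |
        ∀ v, w v ≤ ∑ Q ∈ (cliquesOf G).filter (fun Q => v ∈ Q), y Q} := by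
      have : {y : Finset V → ℝ |
          ∀ v, w v ≤ ∑ Q ∈ (cliquesOf G).filter (fun Q => v ∈ Q), y Q}
          = ⋂ v : V, {y | w v ≤ ∑ Q ∈ (cliquesOf G).filter (fun Q => v ∈ Q), y Q} := by
        ext y; simp
      rw [this]
      refine isClosed_iInter fun v => isClosed_le continuous_const ?_
      exact continuous_finset_sum _ fun Q _ => continuous_apply Q
    have hDeq : D = (Set.univ.pi fun _ : Finset V => Set.Icc (0:ℝ) C) ∩
        {y : Finset V → ℝ |
          ∀ v, w v ≤ ∑ Q ∈ (cliquesOf G).filter (fun Q => v ∈ Q), y Q} := by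
      ext y
      simp only [hD, Set.mem_setOf_eq, Set.mem_inter_iff, Set.mem_univ_pi]
    rw [hDeq]
    exact h1.inter_right h2
  have hfcont : Continuous (fun y : Finset V → ℝ => ∑ Q ∈ cliquesOf G, y Q) :=
    continuous_finset_sum _ fun Q _ => continuous_apply Q
  have hDne : D.Nonempty := by
    obtain ⟨y, hy0, hyf, hyt⟩ := feas 1 le_rfl
    exact ⟨_, hmemD 1 le_rfl y hy0 hyf hyt⟩
  obtain ⟨ystar, hystarD, hystarmin⟩ := hDcpt.exists_isMinOn hDne hfcont.continuousOn
  have hystar0 : ∀ Q ∈ cliquesOf G, 0 ≤ ystar Q := fun Q _ => (hystarD.1 Q).1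
  have hmW : W ≤ ∑ Q ∈ cliquesOf G, ystar Q := weak ystar hystar0 hystarD.2
  have hmle : ∑ Q ∈ cliquesOf G, ystar Q ≤ W := by
    by_contra hlt
    push_neg at hlt
    set ε : ℝ := ∑ Q ∈ cliquesOf G, ystar Q - W with hε
    have hε0 : 0 < ε := by rw [hε]; linarith
    obtain ⟨d, hd⟩ := exists_nat_gt ((Fintype.card V : ℝ) / ε)
    have hd1 : 1 ≤ d + 1 := by omega
    obtain ⟨y, hy0, hyf, hyt⟩ := feas (d + 1) hd1
    have hyD := hmemD (d + 1) hd1 y hy0 hyf hyt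
    have hmin := hystarmin hyD
    have hsum : ∑ Q ∈ cliquesOf G, (if Q ∈ cliquesOf G then y Q else 0)
        = ∑ Q ∈ cliquesOf G, y Q := by
      refine Finset.sum_congr rfl fun Q hQ => ?_
      simp [hQ]
    have hd10 : (0:ℝ) < (d:ℝ) + 1 := by positivity
    have hcard : (Fintype.card V : ℝ) / (d + 1) < ε := by
      rw [div_lt_iff₀ hd10]
      have h1 : (Fintype.card V : ℝ) / ε < d + 1 := by
        calc (Fintype.card V : ℝ) / ε < d := hd
          _ ≤ d + 1 := by linarith
      calc (Fintype.card V : ℝ) = ((Fintype.card V : ℝ) / ε) * ε := by field_simp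
        _ < ((d:ℝ) + 1) * ε := by
            exact mul_lt_mul_of_pos_right h1 hε0
        _ = ε * ((d:ℝ)+1) := by ring
    have : ∑ Q ∈ cliquesOf G, ystar Q ≤ W + (Fintype.card V : ℝ) / (d+1) := by
      calc ∑ Q ∈ cliquesOf G, ystar Q
          ≤ ∑ Q ∈ cliquesOf G, (if Q ∈ cliquesOf G then y Q else 0) := hmin
        _ = ∑ Q ∈ cliquesOf G, y Q := hsum
        _ ≤ W + (Fintype.card V : ℝ) / (d+1) := by exact_mod_cast hyt
    rw [hε] at hcard
    linarith
  have hmeq : ∑ Q ∈ cliquesOf G, ystar Q = W := le_antisymm hmle hmW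
  constructor
  · exact ⟨ystar, hystar0, hystarD.2, by rw [hWorth, hmeq]⟩
  · rintro s ⟨y, hy0, hyf, rfl⟩
    rw [hWorth]
    exact weak y hy0 hyf
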